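/- Let H ≤ G be finite groups and let a ∈ kG be H-invariant under conjugation (ha = ah for all h ∈ H). Then p_H(ga) = p_H(ag) for all g ∈ G, where p_H : kG → kH is the projection sending g ↦ g for g ∈ H and g ↦ 0 otherwise. -/

import Mathlib

open MonoidAlgebra Classical

variable {k : Type} [CommRing k] {G : Type} [Group G] [Fintype G]

/-- The projection `p_H : kG → kG` (with image `kH ⊆ kG`) sending `g ↦ g` for
`g ∈ H` and `g ↦ 0` otherwise, extended `k`-linearly. -/
noncomputable def pHG (k : Type) [CommRing k] {G : Type} [Group G] (H : Subgroup G) :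
    MonoidAlgebra k G →ₗ[k] MonoidAlgebra k G where
  toFun f := MonoidAlgebra.ofCoeff (f.coeff.filter (· ∈ H))
  map_add' f g := congrArg MonoidAlgebra.ofCoeff Finsupp.filter_add
  map_smul' c f := congrArg MonoidAlgebra.ofCoeff Finsupp.filter_smul

/-- If `a ∈ kG` is `H`-invariant under conjugation
(`h a = a h` for all `h ∈ H`), then `p_H(g a) = p_H(a g)` for all `g ∈ G`. -/
theorem pH_conj_invariant (H : Subgroup G) (a : MonoidAlgebra k G)
    (ha : ∀ h : G, h ∈ H →
      MonoidAlgebra.of k G h * a = a * MonoidAlgebra.of k G h) (g : G) :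
    pHG k H (MonoidAlgebra.of k G g * a) = pHG k H (a * MonoidAlgebra.of k G g) := by
  ext x
  simp only [pHG, LinearMap.coe_mk, AddHom.coe_mk, MonoidAlgebra.coeff_ofCoeff, Finsupp.filter_apply]
  show (Finsupp.filter (· ∈ H) ((of k G) g * a).coeff) x = (Finsupp.filter (· ∈ H) (a * (of k G) g).coeff) x
  simp only [Finsupp.filter_apply]
  split_ifs with hx
  · have key := congrArg (fun f => f.coeff (x * g⁻¹ * x)) (ha x hx)
    simp only [MonoidAlgebra.of_apply, MonoidAlgebra.coeff_single_mul_apply,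
      MonoidAlgebra.coeff_mul_single_apply, one_mul, mul_one] at key ⊢
    have h1 : x⁻¹ * (x * g⁻¹ * x) = g⁻¹ * x := by group
    have h2 : x * g⁻¹ * x * x⁻¹ = x * g⁻¹ := by group
    rw [h1, h2] at key
    exact key
  · rfl
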